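/- Let n ≥ 1, let Γ be a subgroup of GL_n(ℤ) acting orientation-preservingly on Sym_n(ℝ), let h be a perfect form with σ = D(h), and let γ ∈ Γ with γ · σ ≠ σ such that τ = σ ∩ (γ · σ) is a facet of both σ and γ · σ. Then the following are equivalent: (a) there exists g ∈ Γ_σ with g · (γ⁻¹ · τ) = τ; (b) there exists g ∈ Γ_τ whose restriction to the hyperplane span_ℝ(τ) has negative determinant; (c) Γ_σ ∩ Γ_{γ·σ} has index 2 in Γ_τ (equivalently, the set Γ_{(σ, γσ)} = { s ∈ Γ : s · σ = γ · σ and s · (γ · σ) = σ } is nonempty). -/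

import Mathlib

open Matrix

noncomputable section

/-- The real vector space of `n × n` real symmetric matrices, as a submodule of matrices. -/
def SymMat (n : ℕ) : Submodule ℝ (Matrix (Fin n) (Fin n) ℝ) where
  carrier := { A | Aᵀ = A }
  add_mem' := by
    intro a b ha hb
    simp only [Set.mem_setOf_eq] at *
    rw [Matrix.transpose_add, ha, hb]
  zero_mem' := by simp
  smul_mem' := by
    intro c a ha
    simp only [Set.mem_setOf_eq] at *
    rw [Matrix.transpose_smul, ha]

/-- The ℝ-linear endomorphism `X ↦ gᵀ X g` of the space of symmetric matrices. -/
def congrSym (n : ℕ) (g : Matrix (Fin n) (Fin n) ℝ) : SymMat n →ₗ[ℝ] SymMat n where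
  toFun X := ⟨gᵀ * X.1 * g, by
    have hX : (X.1)ᵀ = X.1 := X.2
    show (gᵀ * X.1 * g)ᵀ = gᵀ * X.1 * g
    rw [Matrix.transpose_mul, Matrix.transpose_mul, Matrix.transpose_transpose, hX,
      Matrix.mul_assoc]⟩
  map_add' X Y := by
    ext1
    show gᵀ * (X.1 + Y.1) * g = gᵀ * X.1 * g + gᵀ * Y.1 * g
    rw [Matrix.mul_add, Matrix.add_mul]
  map_smul' c X := by
    ext1
    show gᵀ * (c • X.1) * g = c • (gᵀ * X.1 * g)
    rw [Matrix.mul_smul, Matrix.smul_mul]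

/-- The real matrix obtained from an integer matrix. -/
def realMat {n : ℕ} (g : Matrix (Fin n) (Fin n) ℤ) : Matrix (Fin n) (Fin n) ℝ :=
  g.map (Int.cast : ℤ → ℝ)

/-- The action of `GL n ℤ` on symmetric matrices: `γ · X = (γ⁻¹)ᵀ X γ⁻¹`. -/
def intAct (n : ℕ) (γ : GL (Fin n) ℤ) : SymMat n →ₗ[ℝ] SymMat n :=
  congrSym n (realMat ((γ⁻¹ : GL (Fin n) ℤ) : Matrix (Fin n) (Fin n) ℤ))

lemma realMat_mul {n : ℕ} (A B : Matrix (Fin n) (Fin n) ℤ) :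
    realMat (A * B) = realMat A * realMat B := by
  simpa [realMat] using Matrix.map_mul (L := A) (M := B) (f := Int.castRingHom ℝ)

lemma realMat_one {n : ℕ} : realMat (1 : Matrix (Fin n) (Fin n) ℤ) = 1 := by
  simpa [realMat] using Matrix.map_one (Int.cast : ℤ → ℝ) Int.cast_zero Int.cast_one

lemma intAct_one (n : ℕ) : intAct n 1 = LinearMap.id := by
  unfold intAct congrSym
  ext X
  simp [realMat_one]

lemma intAct_mul (n : ℕ) (g h : GL (Fin n) ℤ) :
    intAct n (g * h) = (intAct n g).comp (intAct n h) := by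
  unfold intAct congrSym
  ext X
  simp [_root_.mul_inv_rev, realMat_mul, Matrix.transpose_mul, Matrix.mul_assoc]

/-- The action of `GL n ℤ` on subsets of symmetric matrices. -/
def actSet (n : ℕ) (γ : GL (Fin n) ℤ) (S : Set (SymMat n)) : Set (SymMat n) :=
  (intAct n γ) '' S

lemma actSet_one (n : ℕ) (S : Set (SymMat n)) : actSet n 1 S = S := by
  simp [actSet, intAct_one]

lemma actSet_mul (n : ℕ) (g h : GL (Fin n) ℤ) (S : Set (SymMat n)) :
    actSet n (g * h) S = actSet n g (actSet n h S) := by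
  rw [actSet, actSet, actSet, intAct_mul, ← Set.image_comp]; rfl

/-- The setwise stabilizer of `S` in the subgroup `Γ ≤ GL n ℤ`. -/
def stab (n : ℕ) (Γ : Subgroup (GL (Fin n) ℤ)) (S : Set (SymMat n)) : Subgroup (GL (Fin n) ℤ) where
  carrier := { g | g ∈ Γ ∧ actSet n g S = S }
  one_mem' := ⟨Γ.one_mem, actSet_one n S⟩
  mul_mem' := by
    rintro a b ⟨haΓ, ha⟩ ⟨hbΓ, hb⟩
    exact ⟨Γ.mul_mem haΓ hbΓ, by rw [actSet_mul, hb, ha]⟩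
  inv_mem' := by
    rintro a ⟨haΓ, ha⟩
    refine ⟨Γ.inv_mem haΓ, ?_⟩
    conv_lhs => rw [← ha]
    rw [← actSet_mul, inv_mul_cancel, actSet_one]
/-- The value `xᵀ h x` of a real quadratic form at an integer vector. -/
def intQuad (n : ℕ) (h : Matrix (Fin n) (Fin n) ℝ) (x : Fin n → ℤ) : ℝ :=
  (fun i => (x i : ℝ)) ⬝ᵥ h.mulVec (fun i => (x i : ℝ))

/-- The set of minimal vectors of `h`: the nonzero integer vectors achieving the minimum
of `h` over nonzero integer vectors. -/
def minVecs (n : ℕ) (h : Matrix (Fin n) (Fin n) ℝ) : Set (Fin n → ℤ) :=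
  { x | x ≠ 0 ∧ ∀ y : Fin n → ℤ, y ≠ 0 → intQuad n h x ≤ intQuad n h y }

/-- The symmetric rank-one matrix `x xᵀ` associated with an integer vector `x`. -/
def rankOneSym (n : ℕ) (x : Fin n → ℤ) : SymMat n :=
  ⟨Matrix.vecMulVec (fun i => (x i : ℝ)) (fun i => (x i : ℝ)), by
    show (Matrix.vecMulVec _ _)ᵀ = _
    ext i j
    simp [Matrix.vecMulVec, mul_comm]⟩

/-- A positive definite form `h` is perfect if the rank-one matrices `x xᵀ`, for `x` a
minimal vector of `h`, span the space of symmetric matrices. -/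
def IsPerfect (n : ℕ) (h : Matrix (Fin n) (Fin n) ℝ) : Prop :=
  h.PosDef ∧ Submodule.span ℝ (rankOneSym n '' minVecs n h) = ⊤

/-- The Voronoi domain of `h`: all nonnegative real linear combinations of the matrices
`x xᵀ` for `x` a minimal vector of `h`. -/
def VorDom (n : ℕ) (h : Matrix (Fin n) (Fin n) ℝ) : Set (SymMat n) :=
  { M | ∃ (s : Finset (Fin n → ℤ)) (c : (Fin n → ℤ) → ℝ),
      (∀ x ∈ s, x ∈ minVecs n h) ∧ (∀ x ∈ s, 0 ≤ c x) ∧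
      M = ∑ x ∈ s, c x • rankOneSym n x }

/-- `τ` is a facet of the convex cone `C`: an extreme subset whose ℝ-linear span is a
hyperplane (codimension-one subspace). -/
def IsFacetOf (n : ℕ) (C τ : Set (SymMat n)) : Prop :=
  IsExtreme ℝ C τ ∧
    Module.finrank ℝ (Submodule.span ℝ τ) + 1 = Module.finrank ℝ (SymMat n)

/-- Two perfect forms are neighbours if their (distinct) Voronoi domains intersect in a
common facet. -/
def Neighbours (n : ℕ) (h h' : Matrix (Fin n) (Fin n) ℝ) : Prop :=
  IsPerfect n h ∧ IsPerfect n h' ∧ VorDom n h ≠ VorDom n h' ∧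
    IsFacetOf n (VorDom n h) (VorDom n h ∩ VorDom n h') ∧
    IsFacetOf n (VorDom n h') (VorDom n h ∩ VorDom n h')

/-- Standing assumption (a theorem of Voronoi reduction theory): every facet of the
Voronoi domain of a perfect form is contained in exactly two Voronoi domains of perfect
forms, and is their intersection. -/
def StandingAssumption (n : ℕ) : Prop :=
  ∀ h : Matrix (Fin n) (Fin n) ℝ, IsPerfect n h →
    ∀ τ : Set (SymMat n), IsFacetOf n (VorDom n h) τ →
      ∃ h' : Matrix (Fin n) (Fin n) ℝ, IsPerfect n h' ∧ VorDom n h' ≠ VorDom n h ∧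
        τ = VorDom n h ∩ VorDom n h' ∧
        ∀ h'' : Matrix (Fin n) (Fin n) ℝ, IsPerfect n h'' → τ ⊆ VorDom n h'' →
          VorDom n h'' = VorDom n h ∨ VorDom n h'' = VorDom n h'

/-- The set of elements of `Γ` swapping the two sets `σ` and `σ'`. -/
def swapSet (n : ℕ) (Γ : Subgroup (GL (Fin n) ℤ)) (σ σ' : Set (SymMat n)) :
    Set (GL (Fin n) ℤ) :=
  { s | s ∈ Γ ∧ actSet n s σ = σ' ∧ actSet n s σ' = σ }

set_option synthInstance.maxHeartbeats 1000000 in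
/-- The determinant of the restriction of the action of `g` to the span of `τ`, given a
proof `hm` that the span is mapped into itself. -/
def restrictDet (n : ℕ) (g : GL (Fin n) ℤ) (τ : Set (SymMat n))
    (hm : ∀ x ∈ Submodule.span ℝ τ, intAct n g x ∈ Submodule.span ℝ τ) : ℝ :=
  LinearMap.det (M := Submodule.span ℝ τ) (A := ℝ)
    ((intAct n g).restrict (p := Submodule.span ℝ τ) (q := Submodule.span ℝ τ) hm)


section Aux

variable {n : ℕ}

lemma intAct_inv_comp (g : GL (Fin n) ℤ) :
    (intAct n g⁻¹).comp (intAct n g) = LinearMap.id := by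
  rw [← intAct_mul, inv_mul_cancel, intAct_one]

lemma intAct_comp_inv (g : GL (Fin n) ℤ) :
    (intAct n g).comp (intAct n g⁻¹) = LinearMap.id := by
  rw [← intAct_mul, mul_inv_cancel, intAct_one]

lemma intAct_inv_apply (g : GL (Fin n) ℤ) (x : SymMat n) :
    intAct n g⁻¹ (intAct n g x) = x :=
  DFunLike.congr_fun (intAct_inv_comp g) x

lemma intAct_apply_inv (g : GL (Fin n) ℤ) (x : SymMat n) :
    intAct n g (intAct n g⁻¹ x) = x :=
  DFunLike.congr_fun (intAct_comp_inv g) x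

lemma intAct_injective (g : GL (Fin n) ℤ) : Function.Injective (intAct n g) :=
  Function.LeftInverse.injective (g := intAct n g⁻¹) (intAct_inv_apply g)

lemma intAct_surjective (g : GL (Fin n) ℤ) : Function.Surjective (intAct n g) :=
  Function.RightInverse.surjective (g := intAct n g⁻¹) (intAct_apply_inv g)

lemma actSet_inv_actSet (g : GL (Fin n) ℤ) (S : Set (SymMat n)) :
    actSet n g⁻¹ (actSet n g S) = S := by
  rw [← actSet_mul, inv_mul_cancel, actSet_one]

lemma actSet_actSet_inv (g : GL (Fin n) ℤ) (S : Set (SymMat n)) :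
    actSet n g (actSet n g⁻¹ S) = S := by
  rw [← actSet_mul, mul_inv_cancel, actSet_one]

lemma actSet_inter (g : GL (Fin n) ℤ) (S T : Set (SymMat n)) :
    actSet n g (S ∩ T) = actSet n g S ∩ actSet n g T :=
  Set.image_inter (intAct_injective g)

lemma actSet_injective (g : GL (Fin n) ℤ) : Function.Injective (actSet n g) := by
  intro S T hST
  have := congrArg (actSet n g⁻¹) hST
  rwa [actSet_inv_actSet, actSet_inv_actSet] at this

lemma actSet_mono (g : GL (Fin n) ℤ) {S T : Set (SymMat n)} (hST : S ⊆ T) :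
    actSet n g S ⊆ actSet n g T :=
  Set.image_mono hST

lemma mem_stab {Γ : Subgroup (GL (Fin n) ℤ)} {S : Set (SymMat n)} {g : GL (Fin n) ℤ} :
    g ∈ stab n Γ S ↔ g ∈ Γ ∧ actSet n g S = S := Iff.rfl

end Aux
section Aux2

variable {n : ℕ}

/-- cast of an integer vector to a real vector -/
def castVec (x : Fin n → ℤ) : Fin n → ℝ := fun i => (x i : ℝ)

lemma mul_vecMulVec (M : Matrix (Fin n) (Fin n) ℝ) (u v : Fin n → ℝ) :
    M * Matrix.vecMulVec u v = Matrix.vecMulVec (M *ᵥ u) v := by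
  ext i j
  simp [Matrix.mul_apply, Matrix.vecMulVec_apply, Matrix.mulVec, dotProduct,
    Finset.sum_mul, mul_assoc]

lemma vecMulVec_mul (M : Matrix (Fin n) (Fin n) ℝ) (u v : Fin n → ℝ) :
    Matrix.vecMulVec u v * M = Matrix.vecMulVec u (v ᵥ* M) := by
  ext i j
  simp [Matrix.mul_apply, Matrix.vecMulVec_apply, Matrix.vecMul, dotProduct,
    Finset.mul_sum, mul_assoc, mul_comm, mul_left_comm]

lemma realMat_transpose (A : Matrix (Fin n) (Fin n) ℤ) :
    realMat Aᵀ = (realMat A)ᵀ := by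
  ext i j; simp [realMat]

lemma realMat_mulVec_cast (A : Matrix (Fin n) (Fin n) ℤ) (x : Fin n → ℤ) :
    realMat A *ᵥ castVec x = castVec (A *ᵥ x) := by
  funext i
  simp [realMat, castVec, Matrix.mulVec, dotProduct]

/-- the integer-vector map corresponding to the action of `g` on rank-one matrices -/
def piG (g : GL (Fin n) ℤ) (x : Fin n → ℤ) : Fin n → ℤ :=
  ((g⁻¹ : GL (Fin n) ℤ) : Matrix (Fin n) (Fin n) ℤ)ᵀ *ᵥ x

lemma coe_inv_mul (g : GL (Fin n) ℤ) :
    ((g⁻¹ : GL (Fin n) ℤ) : Matrix (Fin n) (Fin n) ℤ) * (g : Matrix (Fin n) (Fin n) ℤ) = 1 := by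
  rw [← Units.val_mul, inv_mul_cancel, Units.val_one]

lemma coe_mul_inv (g : GL (Fin n) ℤ) :
    (g : Matrix (Fin n) (Fin n) ℤ) * ((g⁻¹ : GL (Fin n) ℤ) : Matrix (Fin n) (Fin n) ℤ) = 1 := by
  rw [← Units.val_mul, mul_inv_cancel, Units.val_one]

lemma piG_inv_piG (g : GL (Fin n) ℤ) (x : Fin n → ℤ) : piG g⁻¹ (piG g x) = x := by
  simp only [piG, inv_inv, Matrix.mulVec_mulVec, ← Matrix.transpose_mul, coe_inv_mul,
    Matrix.transpose_one, Matrix.one_mulVec]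

lemma piG_piG_inv (g : GL (Fin n) ℤ) (x : Fin n → ℤ) : piG g (piG g⁻¹ x) = x := by
  simp only [piG, inv_inv, Matrix.mulVec_mulVec, ← Matrix.transpose_mul, coe_mul_inv,
    Matrix.transpose_one, Matrix.one_mulVec]

lemma piG_injective (g : GL (Fin n) ℤ) : Function.Injective (piG g) :=
  Function.LeftInverse.injective (g := piG g⁻¹) (piG_inv_piG g)

lemma piG_eq_zero_iff (g : GL (Fin n) ℤ) {x : Fin n → ℤ} : piG g x = 0 ↔ x = 0 := by
  constructor
  · intro hx
    have := congrArg (piG g⁻¹) hx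
    rw [piG_inv_piG] at this
    rw [this]
    funext i; simp [piG, Matrix.mulVec]
  · rintro rfl
    funext i; simp [piG, Matrix.mulVec]

lemma intAct_rankOne (g : GL (Fin n) ℤ) (x : Fin n → ℤ) :
    intAct n g (rankOneSym n x) = rankOneSym n (piG g x) := by
  apply Subtype.ext
  show (realMat ((g⁻¹ : GL (Fin n) ℤ) : Matrix (Fin n) (Fin n) ℤ))ᵀ *
      Matrix.vecMulVec (castVec x) (castVec x) *
      realMat ((g⁻¹ : GL (Fin n) ℤ) : Matrix (Fin n) (Fin n) ℤ)
      = Matrix.vecMulVec (castVec (piG g x)) (castVec (piG g x))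
  rw [mul_vecMulVec, vecMulVec_mul, ← Matrix.mulVec_transpose]
  rw [show (realMat ((g⁻¹ : GL (Fin n) ℤ) : Matrix (Fin n) (Fin n) ℤ))ᵀ *ᵥ castVec x
      = castVec (piG g x) from by rw [← realMat_transpose, realMat_mulVec_cast]; rfl]

end Aux2
section Aux3

variable {n : ℕ}

/-- the conjugated form -/
def conjForm (g : GL (Fin n) ℤ) (h : Matrix (Fin n) (Fin n) ℝ) : Matrix (Fin n) (Fin n) ℝ :=
  realMat (g : Matrix (Fin n) (Fin n) ℤ) * h * (realMat (g : Matrix (Fin n) (Fin n) ℤ))ᵀ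

lemma realMat_inv_mul (g : GL (Fin n) ℤ) :
    realMat ((g⁻¹ : GL (Fin n) ℤ) : Matrix (Fin n) (Fin n) ℤ) *
      realMat (g : Matrix (Fin n) (Fin n) ℤ) = 1 := by
  rw [← realMat_mul, coe_inv_mul, realMat_one]

lemma realMat_mul_inv (g : GL (Fin n) ℤ) :
    realMat (g : Matrix (Fin n) (Fin n) ℤ) *
      realMat ((g⁻¹ : GL (Fin n) ℤ) : Matrix (Fin n) (Fin n) ℤ) = 1 := by
  rw [← realMat_mul, coe_mul_inv, realMat_one]

lemma castVec_piG (g : GL (Fin n) ℤ) (x : Fin n → ℤ) :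
    castVec (piG g x)
      = (realMat ((g⁻¹ : GL (Fin n) ℤ) : Matrix (Fin n) (Fin n) ℤ))ᵀ *ᵥ castVec x := by
  rw [← realMat_transpose, realMat_mulVec_cast]; rfl

lemma intQuad_conj (g : GL (Fin n) ℤ) (h : Matrix (Fin n) (Fin n) ℝ) (x : Fin n → ℤ) :
    intQuad n (conjForm g h) (piG g x) = intQuad n h x := by
  set A := realMat (g : Matrix (Fin n) (Fin n) ℤ) with hA
  set m := realMat ((g⁻¹ : GL (Fin n) ℤ) : Matrix (Fin n) (Fin n) ℤ) with hm
  show castVec (piG g x) ⬝ᵥ (A * h * Aᵀ) *ᵥ castVec (piG g x)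
      = castVec x ⬝ᵥ h *ᵥ castVec x
  rw [castVec_piG, ← hm]
  have h1 : (A * h * Aᵀ) *ᵥ (mᵀ *ᵥ castVec x) = (A * h) *ᵥ castVec x := by
    rw [Matrix.mulVec_mulVec, Matrix.mul_assoc (A * h), ← Matrix.transpose_mul,
      realMat_inv_mul g, Matrix.transpose_one, Matrix.mul_one]
  rw [h1, Matrix.mulVec_transpose, ← Matrix.dotProduct_mulVec,
    Matrix.mulVec_mulVec, ← Matrix.mul_assoc, realMat_inv_mul g, Matrix.one_mul]

lemma conjForm_posDef (g : GL (Fin n) ℤ) {h : Matrix (Fin n) (Fin n) ℝ} (hpd : h.PosDef) :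
    (conjForm g h).PosDef := by
  rw [Matrix.posDef_iff_dotProduct_mulVec]
  constructor
  · have hh : hᵀ = h := by
      have := hpd.1
      simpa [Matrix.IsHermitian, Matrix.conjTranspose_eq_transpose_of_trivial] using this
    show (conjForm g h)ᴴ = conjForm g h
    have : (conjForm g h)ᴴ = (conjForm g h)ᵀ := by
      ext i j; simp [Matrix.conjTranspose_apply]
    rw [this]
    show (realMat _ * h * (realMat _)ᵀ)ᵀ = _
    rw [Matrix.transpose_mul, Matrix.transpose_mul, Matrix.transpose_transpose, hh,
      ← Matrix.mul_assoc]
    rfl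
  · intro x hx
    set A := realMat (g : Matrix (Fin n) (Fin n) ℤ) with hA
    have hst : star x = x := by funext i; simp
    have key : (A * h * Aᵀ) *ᵥ x = A *ᵥ (h *ᵥ (Aᵀ *ᵥ x)) := by
      rw [Matrix.mulVec_mulVec, Matrix.mulVec_mulVec]
    show 0 < star x ⬝ᵥ (A * h * Aᵀ) *ᵥ x
    rw [hst, key, Matrix.dotProduct_mulVec, ← Matrix.mulVec_transpose]
    have hy : Aᵀ *ᵥ x ≠ 0 := by
      intro h0
      apply hx
      have := congrArg (fun v => (realMat ((g⁻¹ : GL (Fin n) ℤ) : Matrix (Fin n) (Fin n) ℤ))ᵀ *ᵥ v) h0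
      simp only [hA, Matrix.mulVec_mulVec, ← Matrix.transpose_mul, realMat_mul_inv g,
        Matrix.transpose_one, Matrix.one_mulVec, Matrix.mulVec_zero] at this
      exact this
    have := (Matrix.posDef_iff_dotProduct_mulVec.mp hpd).2 (x := Aᵀ *ᵥ x) hy
    rw [show star (Aᵀ *ᵥ x) = Aᵀ *ᵥ x from by funext i; simp] at this
    exact this

lemma minVecs_conj (g : GL (Fin n) ℤ) (h : Matrix (Fin n) (Fin n) ℝ) :
    minVecs n (conjForm g h) = piG g '' minVecs n h := by
  ext y
  constructor
  · rintro ⟨hy0, hymin⟩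
    refine ⟨piG g⁻¹ y, ⟨?_, ?_⟩, piG_piG_inv g y⟩
    · intro h0; apply hy0
      have := congrArg (piG g) h0
      rw [piG_piG_inv] at this
      rw [this]; exact (piG_eq_zero_iff g).mpr rfl
    · intro z hz
      have h1 : intQuad n h (piG g⁻¹ y) = intQuad n (conjForm g h) y := by
        conv_rhs => rw [← piG_piG_inv g y]
        rw [intQuad_conj]
      have h2 : intQuad n h z = intQuad n (conjForm g h) (piG g z) := (intQuad_conj g h z).symm
      rw [h1, h2]
      exact hymin _ (by rwa [Ne, piG_eq_zero_iff])
  · rintro ⟨x, ⟨hx0, hxmin⟩, rfl⟩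
    refine ⟨by rwa [Ne, piG_eq_zero_iff], ?_⟩
    intro z hz
    rw [intQuad_conj]
    have h2 : intQuad n (conjForm g h) z = intQuad n h (piG g⁻¹ z) := by
      conv_lhs => rw [← piG_piG_inv g z]
      rw [intQuad_conj]
    rw [h2]
    refine hxmin _ ?_
    intro h0; apply hz
    have := congrArg (piG g) h0
    rw [piG_piG_inv] at this
    rw [this]; exact (piG_eq_zero_iff g).mpr rfl

end Aux3
section Aux4

variable {n : ℕ}

lemma zero_mem_vorDom (h : Matrix (Fin n) (Fin n) ℝ) : (0 : SymMat n) ∈ VorDom n h :=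
  ⟨∅, fun _ => 0, by simp, by simp, by simp⟩

lemma rankOne_mem_vorDom {h : Matrix (Fin n) (Fin n) ℝ} {x : Fin n → ℤ}
    (hx : x ∈ minVecs n h) : rankOneSym n x ∈ VorDom n h :=
  ⟨{x}, fun _ => 1, by simpa using hx, by simp, by simp⟩

lemma vorDom_add {h : Matrix (Fin n) (Fin n) ℝ} {M N : SymMat n}
    (hM : M ∈ VorDom n h) (hN : N ∈ VorDom n h) : M + N ∈ VorDom n h := by
  obtain ⟨s, c, hsmin, hc, rfl⟩ := hM
  obtain ⟨t, d, htmin, hd, rfl⟩ := hN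
  refine ⟨s ∪ t, fun x => (if x ∈ s then c x else 0) + (if x ∈ t then d x else 0), ?_, ?_, ?_⟩
  · intro x hx
    rcases Finset.mem_union.mp hx with hx | hx
    · exact hsmin x hx
    · exact htmin x hx
  · intro x _
    dsimp only
    have h1 : (0:ℝ) ≤ if x ∈ s then c x else 0 := by
      split_ifs with hxs; exacts [hc x hxs, le_rfl]
    have h2 : (0:ℝ) ≤ if x ∈ t then d x else 0 := by
      split_ifs with hxt; exacts [hd x hxt, le_rfl]
    exact add_nonneg h1 h2
  · have expand : (∑ x ∈ s ∪ t,
        (fun x => (if x ∈ s then c x else 0) + if x ∈ t then d x else 0) x • rankOneSym n x)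
        = (∑ x ∈ s ∪ t, (if x ∈ s then c x else 0) • rankOneSym n x)
          + (∑ x ∈ s ∪ t, (if x ∈ t then d x else 0) • rankOneSym n x) := by
      simp [add_smul, Finset.sum_add_distrib]
    have e1 : ∑ x ∈ s ∪ t, (if x ∈ s then c x else 0) • rankOneSym n x
        = ∑ x ∈ s, c x • rankOneSym n x := by
      rw [← Finset.sum_subset Finset.subset_union_left
        (fun x _ hx => by rw [if_neg hx, zero_smul])]
      exact Finset.sum_congr rfl fun x hx => by rw [if_pos hx]
    have e2 : ∑ x ∈ s ∪ t, (if x ∈ t then d x else 0) • rankOneSym n x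
        = ∑ x ∈ t, d x • rankOneSym n x := by
      rw [← Finset.sum_subset Finset.subset_union_right
        (fun x _ hx => by rw [if_neg hx, zero_smul])]
      exact Finset.sum_congr rfl fun x hx => by rw [if_pos hx]
    rw [expand, e1, e2]

lemma vorDom_smul {h : Matrix (Fin n) (Fin n) ℝ} {M : SymMat n} {a : ℝ}
    (ha : 0 ≤ a) (hM : M ∈ VorDom n h) : a • M ∈ VorDom n h := by
  obtain ⟨s, c, hsmin, hc, rfl⟩ := hM
  refine ⟨s, fun x => a * c x, hsmin, fun x hx => mul_nonneg ha (hc x hx), ?_⟩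
  rw [Finset.smul_sum]
  exact Finset.sum_congr rfl fun x _ => by dsimp only; rw [smul_smul]

lemma span_vorDom_eq_top {h : Matrix (Fin n) (Fin n) ℝ} (hperf : IsPerfect n h) :
    Submodule.span ℝ (VorDom n h) = ⊤ := by
  apply eq_top_iff.mpr
  rw [← hperf.2]
  apply Submodule.span_mono
  rintro - ⟨x, hx, rfl⟩
  exact rankOne_mem_vorDom hx

lemma mem_vorDom_of_sum (h : Matrix (Fin n) (Fin n) ℝ) (s : Finset (Fin n → ℤ))
    (c : (Fin n → ℤ) → ℝ) (φ : (Fin n → ℤ) → (Fin n → ℤ)) (hinj : Function.Injective φ)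
    (hmem : ∀ x ∈ s, φ x ∈ minVecs n h) (hc : ∀ x ∈ s, 0 ≤ c x) :
    (∑ x ∈ s, c x • rankOneSym n (φ x)) ∈ VorDom n h := by
  classical
  refine ⟨s.image φ, fun y => if hy : ∃ x ∈ s, φ x = y then c hy.choose else 0, ?_, ?_, ?_⟩
  · intro y hy
    obtain ⟨x, hx, rfl⟩ := Finset.mem_image.mp hy
    exact hmem x hx
  · intro y hy
    obtain ⟨x, hx, rfl⟩ := Finset.mem_image.mp hy
    have hex : ∃ x' ∈ s, φ x' = φ x := ⟨x, hx, rfl⟩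
    dsimp only
    rw [dif_pos hex]
    exact hc _ hex.choose_spec.1
  · rw [Finset.sum_image (fun a _ b _ hab => hinj hab)]
    apply Finset.sum_congr rfl
    intro x hx
    have hex : ∃ x' ∈ s, φ x' = φ x := ⟨x, hx, rfl⟩
    dsimp only
    rw [dif_pos hex]
    have := hinj hex.choose_spec.2
    rw [this]

lemma actSet_vorDom (g : GL (Fin n) ℤ) (h : Matrix (Fin n) (Fin n) ℝ) :
    actSet n g (VorDom n h) = VorDom n (conjForm g h) := by
  ext M
  constructor
  · rintro ⟨N, ⟨s, c, hsmin, hc, rfl⟩, rfl⟩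
    rw [map_sum]
    have : ∀ x ∈ s, intAct n g (c x • rankOneSym n x) = c x • rankOneSym n (piG g x) := by
      intro x _; rw [_root_.map_smul, intAct_rankOne]
    rw [Finset.sum_congr rfl this]
    apply mem_vorDom_of_sum _ _ _ _ (piG_injective g) _ hc
    intro x hx
    rw [minVecs_conj]
    exact ⟨x, hsmin x hx, rfl⟩
  · rintro ⟨s, c, hsmin, hc, rfl⟩
    refine ⟨∑ x ∈ s, c x • rankOneSym n (piG g⁻¹ x), ?_, ?_⟩
    · apply mem_vorDom_of_sum _ _ _ _ (piG_injective g⁻¹) _ hc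
      intro x hx
      have := hsmin x hx
      rw [minVecs_conj] at this
      obtain ⟨y, hy, rfl⟩ := this
      rwa [piG_inv_piG]
    · rw [map_sum]
      apply Finset.sum_congr rfl
      intro x _
      rw [_root_.map_smul, intAct_rankOne, piG_piG_inv]

lemma conjForm_perfect (g : GL (Fin n) ℤ) {h : Matrix (Fin n) (Fin n) ℝ}
    (hperf : IsPerfect n h) : IsPerfect n (conjForm g h) := by
  refine ⟨conjForm_posDef g hperf.1, ?_⟩
  rw [minVecs_conj, Set.image_image]
  have : (fun x => rankOneSym n (piG g x)) = fun x => intAct n g (rankOneSym n x) := by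
    funext x; rw [intAct_rankOne]
  rw [this, ← Set.image_image, Submodule.span_image, hperf.2, Submodule.map_top,
    LinearMap.range_eq_top.mpr (intAct_surjective g)]

end Aux4
section Aux5

variable {V : Type*} [AddCommGroup V] [Module ℝ V]

lemma span_cone_diff (τ : Set V) (h0 : (0:V) ∈ τ)
    (hadd : ∀ a ∈ τ, ∀ b ∈ τ, a + b ∈ τ)
    (hsmul : ∀ r : ℝ, 0 ≤ r → ∀ a ∈ τ, r • a ∈ τ) :
    ∀ z ∈ Submodule.span ℝ τ, ∃ t ∈ τ, ∃ t' ∈ τ, z = t - t' := by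
  intro z hz
  let p : Submodule ℝ V :=
    { carrier := {z | ∃ t ∈ τ, ∃ t' ∈ τ, z = t - t'}
      add_mem' := by
        rintro a b ⟨t, ht, t', ht', rfl⟩ ⟨s, hs, s', hs', rfl⟩
        exact ⟨t + s, hadd t ht s hs, t' + s', hadd t' ht' s' hs', by abel⟩
      zero_mem' := ⟨0, h0, 0, h0, by simp⟩
      smul_mem' := by
        rintro c x ⟨t, ht, t', ht', rfl⟩
        rcases le_or_gt 0 c with hc | hc
        · exact ⟨c • t, hsmul c hc t ht, c • t', hsmul c hc t' ht', by rw [smul_sub]⟩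
        · exact ⟨(-c) • t', hsmul (-c) (by linarith) t' ht',
            (-c) • t, hsmul (-c) (by linarith) t ht, by module⟩ }
  have hle : Submodule.span ℝ τ ≤ p := Submodule.span_le.mpr
    (fun t ht => ⟨t, ht, 0, h0, by simp⟩)
  exact hle hz

lemma cone_halfspace (C τ : Set V) (f : V →ₗ[ℝ] ℝ)
    (hCadd : ∀ a ∈ C, ∀ b ∈ C, a + b ∈ C)
    (hCsmul : ∀ r : ℝ, 0 ≤ r → ∀ a ∈ C, r • a ∈ C)
    (hτf : ∀ t ∈ τ, f t = 0)
    (hdiff : ∀ z, f z = 0 → z ∈ C → ∃ t ∈ τ, ∃ t' ∈ τ, z = t - t')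
    (hext : IsExtreme ℝ C τ) :
    (∀ x ∈ C, 0 ≤ f x) ∨ (∀ x ∈ C, f x ≤ 0) := by
  by_contra hcon
  push_neg at hcon
  obtain ⟨⟨a, haC, ha⟩, ⟨b, hbC, hb⟩⟩ := hcon
  -- f a < 0, f b > 0
  set z : V := f b • a + (-(f a)) • b with hzdef
  have hzC : z ∈ C := hCadd _ (hCsmul _ (le_of_lt hb) a haC) _
    (hCsmul _ (by linarith) b hbC)
  have hfz : f z = 0 := by
    simp only [hzdef, map_add, _root_.map_smul, smul_eq_mul]
    ring
  obtain ⟨t, ht, t', ht', hz⟩ := hdiff z hfz hzC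
  -- t = z + t'
  have hseg1 : t ∈ openSegment ℝ ((2:ℝ) • z) ((2:ℝ) • t') := by
    refine ⟨1/2, 1/2, by norm_num, by norm_num, by norm_num, ?_⟩
    rw [hz]
    module
  have h2z : (2:ℝ) • z ∈ C := hCsmul 2 (by norm_num) z hzC
  have h2t' : (2:ℝ) • t' ∈ C := hCsmul 2 (by norm_num) t' (hext.1 ht')
  have h2zτ : (2:ℝ) • z ∈ τ := (hext.2 h2z h2t' ht hseg1)
  -- now 2z ∈ τ; do it again
  have hseg2 : (2:ℝ) • z ∈ openSegment ℝ ((4 * f b) • a) ((4 * (-(f a))) • b) := by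
    refine ⟨1/2, 1/2, by norm_num, by norm_num, by norm_num, ?_⟩
    rw [hzdef]
    module
  have hp1 : (4 * f b) • a ∈ C := hCsmul _ (by linarith) a haC
  have hp2 : (4 * (-(f a))) • b ∈ C := hCsmul _ (by linarith) b hbC
  have hmem := (hext.2 hp1 hp2 h2zτ hseg2)
  have hf0 := hτf _ hmem
  rw [_root_.map_smul, smul_eq_mul] at hf0
  nlinarith

lemma opposite_sides (C C' τ : Set V) (f : V →ₗ[ℝ] ℝ)
    (hCadd : ∀ a ∈ C, ∀ b ∈ C, a + b ∈ C)
    (hCsmul : ∀ r : ℝ, 0 ≤ r → ∀ a ∈ C, r • a ∈ C)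
    (hC'add : ∀ a ∈ C', ∀ b ∈ C', a + b ∈ C')
    (hC'smul : ∀ r : ℝ, 0 ≤ r → ∀ a ∈ C', r • a ∈ C')
    (hτ : τ = C ∩ C')
    (hτf : ∀ t ∈ τ, f t = 0)
    (hdiff : ∀ z, f z = 0 → ∃ t ∈ τ, ∃ t' ∈ τ, z = t - t')
    {p q : V} (hpC : p ∈ C) (hqC' : q ∈ C') (hfp : 0 < f p) (hfq : 0 < f q) : False := by
  set z : V := f p • q - f q • p with hzdef
  have hfz : f z = 0 := by
    simp only [hzdef, map_sub, _root_.map_smul, smul_eq_mul]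
    ring
  obtain ⟨t, ht, t', ht', hz⟩ := hdiff z hfz
  set w : V := t + f q • p with hwdef
  have hw' : w = t' + f p • q := by
    rw [hwdef]
    have hzt : t = z + t' := by rw [hz]; abel
    rw [hzt, hzdef]
    abel
  have hwC : w ∈ C := hCadd t (by rw [hτ] at ht; exact ht.1) _
    (hCsmul _ (le_of_lt hfq) p hpC)
  have hwC' : w ∈ C' := by
    rw [hw']
    exact hC'add t' (by rw [hτ] at ht'; exact ht'.2) _ (hC'smul _ (le_of_lt hfp) q hqC')
  have hwτ : w ∈ τ := by rw [hτ]; exact ⟨hwC, hwC'⟩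
  have hfw := hτf w hwτ
  rw [hwdef, map_add, _root_.map_smul, smul_eq_mul, hτf t ht] at hfw
  nlinarith

lemma exists_functional [FiniteDimensional ℝ V] (H : Submodule ℝ V)
    (hH : Module.finrank ℝ H + 1 = Module.finrank ℝ V) :
    ∃ f : V →ₗ[ℝ] ℝ, LinearMap.ker f = H ∧ ∃ v₀ : V, f v₀ = 1 := by
  have hQ : Module.finrank ℝ (V ⧸ H) = 1 := by
    have := Submodule.finrank_quotient_add_finrank H
    omega
  let b : Module.Basis (Fin 1) ℝ (V ⧸ H) := Module.finBasisOfFinrankEq ℝ (V ⧸ H) hQ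
  set f : V →ₗ[ℝ] ℝ := (b.coord 0).comp H.mkQ with hf
  have hrepr : ∀ y : V ⧸ H, y = (b.repr y 0) • b 0 := by
    intro y
    conv_lhs => rw [← Module.Basis.sum_repr b y]
    rw [Fin.sum_univ_one]
  have hker : LinearMap.ker f = H := by
    ext x
    simp only [LinearMap.mem_ker, hf, LinearMap.comp_apply]
    constructor
    · intro hx
      have h0 : H.mkQ x = 0 := by
        rw [hrepr (H.mkQ x)]
        have hc : b.coord 0 (H.mkQ x) = b.repr (H.mkQ x) 0 := rfl
        rw [← hc, hx, zero_smul]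
      rwa [← Submodule.Quotient.mk_eq_zero H]
    · intro hx
      have h0 : H.mkQ x = 0 := (Submodule.Quotient.mk_eq_zero H).mpr hx
      rw [h0, map_zero]
  refine ⟨f, hker, ?_⟩
  obtain ⟨v, hv⟩ := H.mkQ_surjective (b 0)
  refine ⟨v, ?_⟩
  show b.coord 0 (H.mkQ v) = 1
  rw [hv]
  simp [Module.Basis.coord_apply]

end Aux5
section Aux6

variable {V : Type*} [AddCommGroup V] [Module ℝ V]

lemma lam_spec (φ : V →ₗ[ℝ] V) (f : V →ₗ[ℝ] ℝ) (v₀ : V) (hv₀ : f v₀ = 1)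
    (hm : ∀ x, f x = 0 → f (φ x) = 0) :
    ∀ x, f (φ x) = f (φ v₀) * f x := by
  intro x
  have h1 : f (x - f x • v₀) = 0 := by
    rw [map_sub, _root_.map_smul, smul_eq_mul, hv₀, mul_one, sub_self]
  have h2 := hm _ h1
  rw [map_sub, _root_.map_smul, map_sub, _root_.map_smul, smul_eq_mul] at h2
  have : f (φ x) - f x * f (φ v₀) = 0 := h2
  linarith [this]

lemma det_restrict_hyperplane [FiniteDimensional ℝ V] (φ : V →ₗ[ℝ] V) (f : V →ₗ[ℝ] ℝ)
    (v₀ : V) (hv₀ : f v₀ = 1) (lam : ℝ) (hlam : ∀ x, f (φ x) = lam * f x)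
    (H₀ : Submodule ℝ V) (hHker : H₀ = LinearMap.ker f)
    (hm : ∀ x ∈ H₀, φ x ∈ H₀) :
    LinearMap.det φ = lam * LinearMap.det (φ.restrict hm) := by
  classical
  subst hHker
  set H := LinearMap.ker f with hH
  -- the projection onto H
  have hpmem : ∀ y : V, y - f y • v₀ ∈ H := by
    intro y
    rw [hH, LinearMap.mem_ker, map_sub, _root_.map_smul, smul_eq_mul, hv₀, mul_one, sub_self]
  set pr : V →ₗ[ℝ] V := LinearMap.id - f.smulRight v₀ with hpr
  have hprmem : ∀ y : V, pr y ∈ H := by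
    intro y
    have : pr y = y - f y • v₀ := rfl
    rw [this]; exact hpmem y
  set u : V →ₗ[ℝ] H × ℝ := (pr.codRestrict H hprmem).prod f with hu
  set e : (H × ℝ) →ₗ[ℝ] V := H.subtype.coprod (LinearMap.toSpanSingleton ℝ V v₀) with he
  have h1 : e.comp u = LinearMap.id := by
    apply LinearMap.ext
    intro y
    show (pr y : V) + f y • v₀ = y
    show (y - f y • v₀) + f y • v₀ = y
    abel
  have h2 : u.comp e = LinearMap.id := by
    apply LinearMap.ext
    rintro ⟨⟨x, hx⟩, c⟩
    have hfx : f x = 0 := hx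
    have harg : e (⟨x, hx⟩, c) = x + c • v₀ := rfl
    apply Prod.ext
    · apply Subtype.ext
      show pr (e (⟨x, hx⟩, c)) = x
      rw [harg]
      show (x + c • v₀) - f (x + c • v₀) • v₀ = x
      rw [map_add, _root_.map_smul, smul_eq_mul, hfx, hv₀, mul_one, zero_add]
      abel
    · show f (e (⟨x, hx⟩, c)) = c
      rw [harg, map_add, _root_.map_smul, smul_eq_mul, hfx, hv₀, mul_one, zero_add]
  set eq : (H × ℝ) ≃ₗ[ℝ] V := LinearEquiv.ofLinear e u h1 h2 with heq
  set ψ : (H × ℝ) →ₗ[ℝ] (H × ℝ) := u ∘ₗ φ ∘ₗ e with hψ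
  have hdet : LinearMap.det φ = LinearMap.det ψ := by
    have hconj := LinearMap.det_conj φ eq.symm
    have hcoe : (eq.symm : V →ₗ[ℝ] H × ℝ) = u := rfl
    have hcoe2 : (eq.symm.symm : (H × ℝ) →ₗ[ℝ] V) = e := rfl
    rw [← hconj, hcoe, hcoe2]
  set bH : Module.Basis (Fin (Module.finrank ℝ H)) ℝ H := Module.finBasis ℝ H with hbH
  set bR : Module.Basis Unit ℝ ℝ := Module.Basis.singleton Unit ℝ with hbR
  set b := bH.prod bR with hb
  set M := LinearMap.toMatrix b b ψ with hM
  have hψ1 : ∀ j, ψ (b (Sum.inl j)) = (⟨(φ.restrict hm) (bH j), ((φ.restrict hm) (bH j)).2⟩, 0) := by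
    intro j
    have hbj : b (Sum.inl j) = (bH j, 0) := by
      apply Prod.ext
      · rw [hb]; exact Module.Basis.prod_apply_inl_fst bH bR j
      · rw [hb]; exact Module.Basis.prod_apply_inl_snd bH bR j
    rw [hbj]
    have harg : e ((bH j : H), (0:ℝ)) = (bH j : V) := by
      show (bH j : V) + (0:ℝ) • v₀ = (bH j : V)
      rw [zero_smul, add_zero]
    show u (φ (e ((bH j : H), (0:ℝ)))) = _
    rw [harg]
    have hfφ : f (φ (bH j : V)) = 0 := by
      rw [hlam]
      have : f (bH j : V) = 0 := (bH j).2
      rw [this, mul_zero]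
    apply Prod.ext
    · apply Subtype.ext
      show pr (φ (bH j : V)) = ((φ.restrict hm) (bH j) : V)
      show φ (bH j : V) - f (φ (bH j : V)) • v₀ = φ (bH j : V)
      rw [hfφ, zero_smul, sub_zero]
    · show f (φ (bH j : V)) = 0
      exact hfφ
  have h21 : ∀ j, M (Sum.inr ()) (Sum.inl j) = 0 := by
    intro j
    rw [hM, LinearMap.toMatrix_apply, hψ1 j]
    rw [hb]
    rw [Module.Basis.prod_repr_inr]
    simp [hbR]
  have h11 : ∀ i j, M (Sum.inl i) (Sum.inl j)
      = LinearMap.toMatrix bH bH (φ.restrict hm) i j := by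
    intro i j
    rw [hM, LinearMap.toMatrix_apply, hψ1 j, hb, Module.Basis.prod_repr_inl,
      LinearMap.toMatrix_apply]
  have h22 : M (Sum.inr ()) (Sum.inr ()) = lam := by
    rw [hM, LinearMap.toMatrix_apply]
    have hbinr : b (Sum.inr ()) = (0, 1) := by
      apply Prod.ext
      · rw [hb]; exact Module.Basis.prod_apply_inr_fst bH bR ()
      · rw [hb]
        have := Module.Basis.prod_apply_inr_snd bH bR ()
        rw [this]
        simp [hbR]
    rw [hbinr]
    have harg : e ((0 : H), (1:ℝ)) = v₀ := by
      show ((0 : H) : V) + (1:ℝ) • v₀ = v₀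
      simp
    show b.repr (u (φ (e ((0:H), (1:ℝ))))) (Sum.inr ()) = lam
    rw [harg, hb, Module.Basis.prod_repr_inr]
    have : (u (φ v₀)).2 = f (φ v₀) := rfl
    rw [this]
    simp [hbR, hlam v₀, hv₀]
  -- expressed as block triangular matrix
  have hblocks : M = Matrix.fromBlocks M.toBlocks₁₁ M.toBlocks₁₂ 0 M.toBlocks₂₂ := by
    have hz : M.toBlocks₂₁ = 0 := by
      ext i j
      cases i
      exact h21 j
    rw [← hz, Matrix.fromBlocks_toBlocks]
  have hdet2 : M.det = M.toBlocks₁₁.det * M.toBlocks₂₂.det := by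
    conv_lhs => rw [hblocks]
    exact Matrix.det_fromBlocks_zero₂₁ _ _ _
  have hA : M.toBlocks₁₁ = LinearMap.toMatrix bH bH (φ.restrict hm) := by
    ext i j
    exact h11 i j
  have hD : M.toBlocks₂₂.det = lam := by
    rw [Matrix.det_unique]
    exact h22
  rw [hdet, ← LinearMap.det_toMatrix b ψ, ← hM, hdet2, hA, hD,
    LinearMap.det_toMatrix, mul_comm]

end Aux6
/-- Let `Γ ≤ GL_n(ℤ)` act orientation-preservingly, `h` a perfect form with
`σ = D(h)`, and `γ ∈ Γ` with `γ·σ ≠ σ` such that `τ = σ ∩ γ·σ` is a facet of both. TFAE: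
(a) some `g ∈ Γ_σ` maps `γ⁻¹·τ` to `τ`; (b) some `g ∈ Γ_τ` restricts to `span ℝ τ` with
negative determinant; (c) `Γ_σ ∩ Γ_{γσ}` has index 2 in `Γ_τ` (equivalently,
`Γ_{(σ,γσ)}` is nonempty). -/
theorem statement9 (n : ℕ) (hn : 1 ≤ n) (standing : StandingAssumption n)
    (Γ : Subgroup (GL (Fin n) ℤ))
    (hop : ∀ g ∈ Γ, 0 < LinearMap.det (intAct n g))
    (h : Matrix (Fin n) (Fin n) ℝ) (hperf : IsPerfect n h)
    (σ : Set (SymMat n)) (hσ : σ = VorDom n h)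
    (γ : GL (Fin n) ℤ) (hγ : γ ∈ Γ) (hne : actSet n γ σ ≠ σ)
    (τ : Set (SymMat n)) (hτ : τ = σ ∩ actSet n γ σ)
    (hfac : IsFacetOf n σ τ) (hfac' : IsFacetOf n (actSet n γ σ) τ) :
    ((∃ g ∈ stab n Γ σ, actSet n g (actSet n γ⁻¹ τ) = τ) ↔
      (∃ g ∈ stab n Γ τ,
        ∃ hm : (∀ x ∈ Submodule.span ℝ τ, intAct n g x ∈ Submodule.span ℝ τ),
          restrictDet n g τ hm < 0)) ∧
    ((∃ g ∈ stab n Γ σ, actSet n g (actSet n γ⁻¹ τ) = τ) ↔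
      (Subgroup.relIndex (stab n Γ σ ⊓ stab n Γ (actSet n γ σ)) (stab n Γ τ) = 2 ∧
        (swapSet n Γ σ (actSet n γ σ)).Nonempty)) := by
  classical
  -- basic cone facts for σ
  have hσadd : ∀ a ∈ σ, ∀ b ∈ σ, a + b ∈ σ := by
    rw [hσ]; intro a ha b hb; exact vorDom_add ha hb
  have hσsmul : ∀ r : ℝ, 0 ≤ r → ∀ a ∈ σ, r • a ∈ σ := by
    rw [hσ]; intro r hr a ha; exact vorDom_smul hr ha
  have hσ0 : (0 : SymMat n) ∈ σ := by rw [hσ]; exact zero_mem_vorDom h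
  -- γσ is perfect Voronoi domain
  have hγσ_eq : actSet n γ σ = VorDom n (conjForm γ h) := by
    rw [hσ]; exact actSet_vorDom γ h
  have hγσ_perf : IsPerfect n (conjForm γ h) := conjForm_perfect γ hperf
  have hγσadd : ∀ a ∈ actSet n γ σ, ∀ b ∈ actSet n γ σ, a + b ∈ actSet n γ σ := by
    rw [hγσ_eq]; intro a ha b hb; exact vorDom_add ha hb
  have hγσsmul : ∀ r : ℝ, 0 ≤ r → ∀ a ∈ actSet n γ σ, r • a ∈ actSet n γ σ := by
    rw [hγσ_eq]; intro r hr a ha; exact vorDom_smul hr ha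
  have hγσ0 : (0 : SymMat n) ∈ actSet n γ σ := ⟨0, hσ0, map_zero _⟩
  -- τ cone facts
  have hτ0 : (0 : SymMat n) ∈ τ := by rw [hτ]; exact ⟨hσ0, hγσ0⟩
  have hτadd : ∀ a ∈ τ, ∀ b ∈ τ, a + b ∈ τ := by
    rw [hτ]; rintro a ⟨ha1, ha2⟩ b ⟨hb1, hb2⟩
    exact ⟨hσadd a ha1 b hb1, hγσadd a ha2 b hb2⟩
  have hτsmul : ∀ r : ℝ, 0 ≤ r → ∀ a ∈ τ, r • a ∈ τ := by
    rw [hτ]; rintro r hr a ⟨ha1, ha2⟩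
    exact ⟨hσsmul r hr a ha1, hγσsmul r hr a ha2⟩
  -- standing assumption applied to τ
  have hfacV : IsFacetOf n (VorDom n h) τ := hσ ▸ hfac
  obtain ⟨h₂, h₂perf, h₂ne, hτeq₂, huniq⟩ := standing h hperf τ hfacV
  have hγσ_eq₂ : actSet n γ σ = VorDom n h₂ := by
    have hsub : τ ⊆ VorDom n (conjForm γ h) := by
      rw [← hγσ_eq, hτ]; exact Set.inter_subset_right
    rcases huniq _ hγσ_perf hsub with hc | hc
    · exfalso; apply hne; rw [hγσ_eq, hc, ← hσ]
    · rw [hγσ_eq, hc]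
  -- the key dichotomy
  have dichotomy : ∀ g : GL (Fin n) ℤ, actSet n g τ = τ →
      (actSet n g σ = σ ∧ actSet n g (actSet n γ σ) = actSet n γ σ) ∨
      (actSet n g σ = actSet n γ σ ∧ actSet n g (actSet n γ σ) = σ) := by
    intro g hgτ
    have h1 : actSet n g σ = VorDom n (conjForm g h) := by
      rw [hσ]; exact actSet_vorDom g h
    have hτ1 : τ ⊆ VorDom n (conjForm g h) := by
      rw [← h1, ← hgτ]
      exact actSet_mono g (by rw [hτ]; exact Set.inter_subset_left)
    have h2 : actSet n g (actSet n γ σ) = VorDom n (conjForm g h₂) := by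
      rw [hγσ_eq₂]; exact actSet_vorDom g h₂
    have hτ2 : τ ⊆ VorDom n (conjForm g h₂) := by
      rw [← h2]
      conv_lhs => rw [← hgτ]
      exact actSet_mono g (by rw [hτ]; exact Set.inter_subset_right)
    have hgσ : actSet n g σ = σ ∨ actSet n g σ = actSet n γ σ := by
      rcases huniq _ (conjForm_perfect g hperf) hτ1 with hc | hc
      · left; rw [h1, hc, ← hσ]
      · right; rw [h1, hc, ← hγσ_eq₂]
    have hgγσ : actSet n g (actSet n γ σ) = σ ∨
        actSet n g (actSet n γ σ) = actSet n γ σ := by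
      rcases huniq _ (conjForm_perfect g h₂perf) hτ2 with hc | hc
      · left; rw [h2, hc, ← hσ]
      · right; rw [h2, hc, ← hγσ_eq₂]
    rcases hgσ with hc | hc <;> rcases hgγσ with hd | hd
    · exfalso
      apply hne
      have : actSet n g σ = actSet n g (actSet n γ σ) := by rw [hc, hd]
      exact (actSet_injective g this).symm
    · exact Or.inl ⟨hc, hd⟩
    · exact Or.inr ⟨hc, hd⟩
    · exfalso
      apply hne
      have : actSet n g σ = actSet n g (actSet n γ σ) := by rw [hc, hd]
      exact (actSet_injective g this).symm
  -- swap elements stabilize τ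
  have swap_stab_τ : ∀ s : GL (Fin n) ℤ, actSet n s σ = actSet n γ σ →
      actSet n s (actSet n γ σ) = σ → actSet n s τ = τ := by
    intro s hs1 hs2
    rw [hτ, actSet_inter, hs1, hs2, Set.inter_comm]
  -- (a) ↔ nonemptiness of the swap set
  have hAiffNonempty : (∃ g ∈ stab n Γ σ, actSet n g (actSet n γ⁻¹ τ) = τ) ↔
      (swapSet n Γ σ (actSet n γ σ)).Nonempty := by
    constructor
    · rintro ⟨g, hgstab, hgτ'⟩
      obtain ⟨hgΓ, hgσ⟩ := hgstab
      set s := g * γ⁻¹ with hs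
      have hsΓ : s ∈ Γ := Γ.mul_mem hgΓ (Γ.inv_mem hγ)
      have hsτ : actSet n s τ = τ := by
        rw [hs, actSet_mul]; exact hgτ'
      have hsγσ : actSet n s (actSet n γ σ) = σ := by
        rw [hs, ← actSet_mul, inv_mul_cancel_right]
        exact hgσ
      rcases dichotomy s hsτ with ⟨hc1, hc2⟩ | ⟨hc1, hc2⟩
      · exfalso; apply hne
        rw [← hc2, hsγσ]
      · exact ⟨s, hsΓ, hc1, hsγσ⟩
    · rintro ⟨s, hsΓ, hs1, hs2⟩
      refine ⟨s * γ, ⟨Γ.mul_mem hsΓ hγ, ?_⟩, ?_⟩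
      · rw [actSet_mul]; exact hs2
      · rw [← actSet_mul, mul_inv_cancel_right]
        exact swap_stab_τ s hs1 hs2
  -- nonemptiness implies index two
  have hrel : (swapSet n Γ σ (actSet n γ σ)).Nonempty →
      Subgroup.relIndex (stab n Γ σ ⊓ stab n Γ (actSet n γ σ)) (stab n Γ τ) = 2 := by
    rintro ⟨s, hsΓ, hs1, hs2⟩
    have hsτ : actSet n s τ = τ := swap_stab_τ s hs1 hs2
    have hsmem : s ∈ stab n Γ τ := ⟨hsΓ, hsτ⟩
    show ((stab n Γ σ ⊓ stab n Γ (actSet n γ σ)).subgroupOf (stab n Γ τ)).index = 2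
    rw [Subgroup.index_eq_two_iff]
    refine ⟨⟨s, hsmem⟩, ?_⟩
    intro b
    obtain ⟨hbΓ, hbτ⟩ := b.2
    have hcoe : ((b * ⟨s, hsmem⟩ : ↥(stab n Γ τ)) : GL (Fin n) ℤ) = (b : GL (Fin n) ℤ) * s := rfl
    rcases dichotomy (b : GL (Fin n) ℤ) hbτ with ⟨hc1, hc2⟩ | ⟨hc1, hc2⟩
    · refine Or.inr ⟨?_, ?_⟩
      · rw [Subgroup.mem_subgroupOf]
        exact ⟨⟨hbΓ, hc1⟩, ⟨hbΓ, hc2⟩⟩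
      · rw [Subgroup.mem_subgroupOf, hcoe]
        rintro ⟨⟨-, hKσ⟩, -⟩
        apply hne
        have hbs : actSet n ((b : GL (Fin n) ℤ) * s) σ = actSet n γ σ := by
          rw [actSet_mul, hs1, hc2]
        rw [← hbs, hKσ]
    · refine Or.inl ⟨?_, ?_⟩
      · rw [Subgroup.mem_subgroupOf, hcoe]
        have hbsΓ : (b : GL (Fin n) ℤ) * s ∈ Γ := Γ.mul_mem hbΓ hsΓ
        constructor
        · exact ⟨hbsΓ, by rw [actSet_mul, hs1, hc2]⟩
        · exact ⟨hbsΓ, by rw [actSet_mul, hs2, hc1]⟩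
      · rw [Subgroup.mem_subgroupOf]
        rintro ⟨⟨-, hKσ⟩, -⟩
        apply hne
        rw [← hc1, hKσ]
  -- geometric part: the functional cutting out span τ
  obtain ⟨f₀, hker₀, v₀', hv₀'⟩ := exists_functional (Submodule.span ℝ τ) hfac.2
  -- σ lies on one side of the hyperplane
  have hτf₀ : ∀ t ∈ τ, f₀ t = 0 := by
    intro t ht
    have : t ∈ LinearMap.ker f₀ := by rw [hker₀]; exact Submodule.subset_span ht
    exact this
  have hdiff₀ : ∀ z : SymMat n, f₀ z = 0 → ∃ t ∈ τ, ∃ t' ∈ τ, z = t - t' := by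
    intro z hz
    exact span_cone_diff τ hτ0 hτadd hτsmul z (by rw [← hker₀]; exact hz)
  -- a uniform "key" statement, applied to f₀ or -f₀
  have key : ∀ f : SymMat n →ₗ[ℝ] ℝ, LinearMap.ker f = Submodule.span ℝ τ →
      ∀ v₀ : SymMat n, f v₀ = 1 → (∀ x ∈ σ, 0 ≤ f x) →
      ((∃ g ∈ stab n Γ τ,
        ∃ hm : (∀ x ∈ Submodule.span ℝ τ, intAct n g x ∈ Submodule.span ℝ τ),
          restrictDet n g τ hm < 0) ↔
        (swapSet n Γ σ (actSet n γ σ)).Nonempty) := by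
    intro f hker v₀ hv₀ hσpos
    have hτf : ∀ t ∈ τ, f t = 0 := by
      intro t ht
      have : t ∈ LinearMap.ker f := by rw [hker]; exact Submodule.subset_span ht
      exact this
    have hdiff : ∀ z : SymMat n, f z = 0 → ∃ t ∈ τ, ∃ t' ∈ τ, z = t - t' := by
      intro z hz
      exact span_cone_diff τ hτ0 hτadd hτsmul z (by rw [← hker]; exact hz)
    -- find p ∈ σ with f p > 0
    have hspanσ : Submodule.span ℝ σ = ⊤ := by rw [hσ]; exact span_vorDom_eq_top hperf
    have hp : ∃ p ∈ σ, 0 < f p := by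
      by_contra hcon
      push_neg at hcon
      have hzero : ∀ x ∈ σ, f x = 0 := fun x hx =>
        le_antisymm (hcon x hx) (hσpos x hx)
      have hle : Submodule.span ℝ σ ≤ LinearMap.ker f :=
        Submodule.span_le.mpr (fun x hx => hzero x hx)
      rw [hspanσ] at hle
      have : f v₀ = 0 := hle (Submodule.mem_top)
      rw [hv₀] at this
      exact one_ne_zero this
    obtain ⟨p, hpσ, hfp⟩ := hp
    -- γσ lies on the other side
    have hγσneg : ∀ x ∈ actSet n γ σ, f x ≤ 0 := by
      have hspanγσ : Submodule.span ℝ (actSet n γ σ) = ⊤ := by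
        rw [hγσ_eq₂]; exact span_vorDom_eq_top h₂perf
      rcases cone_halfspace (actSet n γ σ) τ f hγσadd hγσsmul hτf
          (fun z hz _ => hdiff z hz) hfac'.1 with hside | hside
      · exfalso
        have hq : ∃ q ∈ actSet n γ σ, 0 < f q := by
          by_contra hcon
          push_neg at hcon
          have hzero : ∀ x ∈ actSet n γ σ, f x = 0 := fun x hx =>
            le_antisymm (hcon x hx) (hside x hx)
          have hle : Submodule.span ℝ (actSet n γ σ) ≤ LinearMap.ker f :=
            Submodule.span_le.mpr (fun x hx => hzero x hx)
          rw [hspanγσ] at hle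
          have : f v₀ = 0 := hle (Submodule.mem_top)
          rw [hv₀] at this
          exact one_ne_zero this
        obtain ⟨q, hqγσ, hfq⟩ := hq
        exact opposite_sides σ (actSet n γ σ) τ f hσadd hσsmul hγσadd hγσsmul hτ hτf
          hdiff hpσ hqγσ hfp hfq
      · exact hside
    -- action of elements stabilizing τ on the hyperplane
    have hm_of : ∀ g : GL (Fin n) ℤ, actSet n g τ = τ →
        ∀ x ∈ Submodule.span ℝ τ, intAct n g x ∈ Submodule.span ℝ τ := by
      intro g hgτ x hx
      have hmap : Submodule.map (intAct n g) (Submodule.span ℝ τ) = Submodule.span ℝ τ := by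
        rw [← Submodule.span_image]
        have him : (⇑(intAct n g) '' τ) = actSet n g τ := rfl
        rw [him, hgτ]
      rw [← hmap]
      exact Submodule.mem_map_of_mem hx
    -- the scaling factor on the quotient
    have hlam_spec : ∀ g : GL (Fin n) ℤ, actSet n g τ = τ →
        ∀ x, f (intAct n g x) = f (intAct n g v₀) * f x := by
      intro g hgτ
      apply lam_spec (intAct n g) f v₀ hv₀
      intro x hx
      have hxτ : x ∈ Submodule.span ℝ τ := by rw [← hker]; exact hx
      have := hm_of g hgτ x hxτ
      rw [← hker] at this
      exact this
    have hdet_eq : ∀ g : GL (Fin n) ℤ, (hgτ : actSet n g τ = τ) →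
        LinearMap.det (intAct n g)
          = f (intAct n g v₀) * restrictDet n g τ (hm_of g hgτ) := by
      intro g hgτ
      exact det_restrict_hyperplane (intAct n g) f v₀ hv₀ (f (intAct n g v₀))
        (hlam_spec g hgτ) (Submodule.span ℝ τ) hker.symm (hm_of g hgτ)
    constructor
    · rintro ⟨g, ⟨hgΓ, hgτ⟩, hm, hdetneg⟩
      have hdetpos := hop g hgΓ
      have heq : restrictDet n g τ hm = restrictDet n g τ (hm_of g hgτ) := rfl
      rw [heq] at hdetneg
      rcases dichotomy g hgτ with ⟨hc1, hc2⟩ | ⟨hc1, hc2⟩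
      · exfalso
        -- g stabilizes σ, so the scaling factor is positive
        have hgp : intAct n g p ∈ σ := by rw [← hc1]; exact ⟨p, hpσ, rfl⟩
        have h1 : 0 ≤ f (intAct n g p) := hσpos _ hgp
        rw [hlam_spec g hgτ p] at h1
        have hlamnn : 0 ≤ f (intAct n g v₀) := by
          rw [mul_comm] at h1
          exact nonneg_of_mul_nonneg_right h1 hfp
        nlinarith [hdet_eq g hgτ]
      · exact ⟨g, hgΓ, hc1, hc2⟩
    · rintro ⟨s, hsΓ, hs1, hs2⟩
      have hsτ : actSet n s τ = τ := swap_stab_τ s hs1 hs2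
      refine ⟨s, ⟨hsΓ, hsτ⟩, hm_of s hsτ, ?_⟩
      have hdetpos := hop s hsΓ
      have hsp : intAct n s p ∈ actSet n γ σ := by rw [← hs1]; exact ⟨p, hpσ, rfl⟩
      have h1 : f (intAct n s p) ≤ 0 := hγσneg _ hsp
      rw [hlam_spec s hsτ p] at h1
      have hlamnp : f (intAct n s v₀) ≤ 0 := by
        rw [mul_comm] at h1
        exact nonpos_of_mul_nonpos_right h1 hfp
      nlinarith [hdet_eq s hsτ]
  -- choose the sign of the functional so that σ is on the nonnegative side
  have hBiffNonempty : (∃ g ∈ stab n Γ τ,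
      ∃ hm : (∀ x ∈ Submodule.span ℝ τ, intAct n g x ∈ Submodule.span ℝ τ),
        restrictDet n g τ hm < 0) ↔
      (swapSet n Γ σ (actSet n γ σ)).Nonempty := by
    rcases cone_halfspace σ τ f₀ hσadd hσsmul hτf₀ (fun z hz _ => hdiff₀ z hz) hfac.1
      with hside | hside
    · exact key f₀ hker₀ v₀' hv₀' hside
    · refine key (-f₀) ?_ (-v₀') ?_ ?_
      · rw [← hker₀]
        ext x
        simp [LinearMap.mem_ker]
      · simp [hv₀']
      · intro x hx
        simp only [LinearMap.neg_apply, Left.nonneg_neg_iff]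
        exact hside x hx
  refine ⟨hAiffNonempty.trans hBiffNonempty.symm, ?_⟩
  rw [hAiffNonempty]
  constructor
  · intro hne'
    exact ⟨hrel hne', hne'⟩
  · intro hc
    exact hc.2
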